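/- Let K ⊂ ℝ^2 be the four corner Cantor set with contraction ratio 1/3, i.e. the attractor of the four maps f_j(x) = x/3 + (2/3)c_j with c_j ∈ {(0,0), (1,0), (1,1), (0,1)}. Let k ≥ 1 be an integer and let θ = (cos α, sin α) ∈ S^1 with α ∈ (0, π/4] and tan α ∈ [3^{−k}, 3^{−(k−1)}). Then the projection P_θ(K) is a union of 2^{k−1} closed line segments of the line L_θ. -/

import Mathlib

open Metric Set
open scoped RealInnerProductSpace ENNReal

/-- Orthogonal projection onto the affine hyperplane through `y` orthogonal to the
unit vector `θ` (for `y = 0` this is the projection onto the hyperplane `L_θ`). -/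
noncomputable def projH {d : ℕ} (θ y z : EuclideanSpace ℝ (Fin d)) : EuclideanSpace ℝ (Fin d) :=
  z - ⟪z - y, θ⟫ • θ

/-- The affine hyperplane `L_{θ,y}` through `y` orthogonal to `θ`. -/
def affHyp {d : ℕ} (θ y : EuclideanSpace ℝ (Fin d)) : Set (EuclideanSpace ℝ (Fin d)) :=
  {x | ⟪x - y, θ⟫ = 0}

/-- The visible part of `F` from the hyperplane `L_{θ,y}`:
points `z ∈ F` such that the segment from `z` to its projection meets `F` only in `z`. -/
noncomputable def visible {d : ℕ} (θ y : EuclideanSpace ℝ (Fin d))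
    (F : Set (EuclideanSpace ℝ (Fin d))) : Set (EuclideanSpace ℝ (Fin d)) :=
  {z | z ∈ F ∧ segment ℝ z (projH θ y z) ∩ F = {z}}

/-- Interior of `A` relative to the hyperplane `L_θ` through the origin orthogonal to `θ`. -/
def relIntH {d : ℕ} (θ : EuclideanSpace ℝ (Fin d)) (A : Set (EuclideanSpace ℝ (Fin d))) :
    Set (EuclideanSpace ℝ (Fin d)) :=
  {x | x ∈ A ∧ ∃ ε > 0, ∀ z : EuclideanSpace ℝ (Fin d), ⟪z, θ⟫ = 0 → dist z x < ε → z ∈ A}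

/-- The penetrable part of `F` in direction `θ`:
`Pen_θ(F) = F ∩ P_θ⁻¹(P_θ(F) \ Int(P_θ(F)))`. -/
noncomputable def pen {d : ℕ} (θ : EuclideanSpace ℝ (Fin d))
    (F : Set (EuclideanSpace ℝ (Fin d))) : Set (EuclideanSpace ℝ (Fin d)) :=
  F ∩ projH θ 0 ⁻¹' (projH θ 0 '' F \ relIntH θ (projH θ 0 '' F))

/-- The Assouad dimension of a set: the infimum of all `s ≥ 0` such that for some `C > 0`,
for all `0 < r < R` and `x ∈ F`, the set `F ∩ B(x,R)` can be covered by at most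
`C (R/r)^s` balls of radius `r`. -/
noncomputable def dimA {d : ℕ} (F : Set (EuclideanSpace ℝ (Fin d))) : ℝ≥0∞ :=
  ⨅ (s : ℝ) (_ : 0 ≤ s) (_ : ∃ C : ℝ, 0 < C ∧ ∀ x ∈ F, ∀ r R : ℝ, 0 < r → r < R →
      ∃ t : Finset (EuclideanSpace ℝ (Fin d)),
        (t.card : ℝ) ≤ C * (R / r) ^ s ∧ F ∩ ball x R ⊆ ⋃ c ∈ t, ball c r),
    ENNReal.ofReal s

/-- Least number of balls of radius `r` needed to cover `F`. -/
noncomputable def coverN {d : ℕ} (F : Set (EuclideanSpace ℝ (Fin d))) (r : ℝ) : ℕ :=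
  sInf {n : ℕ | ∃ t : Finset (EuclideanSpace ℝ (Fin d)), t.card = n ∧ F ⊆ ⋃ c ∈ t, ball c r}

/-- The upper box-counting dimension of a set. -/
noncomputable def udimB {d : ℕ} (F : Set (EuclideanSpace ℝ (Fin d))) : ℝ≥0∞ :=
  Filter.limsup (fun r : ℝ => ENNReal.ofReal (Real.log (coverN F r) / Real.log (1 / r)))
    (nhdsWithin 0 (Set.Ioi 0))

namespace FC

/-- Level sets of the middle-thirds Cantor set. -/
def E : ℕ → Set ℝ
  | 0 => Set.Icc 0 1
  | (n+1) => (fun x => x/3) '' E n ∪ (fun x => x/3 + 2/3) '' E n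

/-- The middle-thirds Cantor set. -/
def C : Set ℝ := ⋂ n, E n

lemma E_subset_unit (n : ℕ) : E n ⊆ Set.Icc 0 1 := by
  induction n with
  | zero => exact le_refl _
  | succ n ih =>
    rintro x (⟨y, hy, rfl⟩ | ⟨y, hy, rfl⟩) <;>
      · obtain ⟨h0, h1⟩ := ih hy
        constructor <;> · simp only; linarith

lemma C_subset_unit : C ⊆ Set.Icc 0 1 := fun x hx => E_subset_unit 0 (mem_iInter.1 hx 0)

lemma mem_C_iff {x : ℝ} : x ∈ C ↔ ∀ n, x ∈ E n := mem_iInter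

lemma C_left {x : ℝ} (h : x ∈ C) : x/3 ∈ C := by
  rw [mem_C_iff] at h ⊢
  intro n
  match n with
  | 0 =>
    obtain ⟨h0, h1⟩ := E_subset_unit 0 (h 0)
    exact ⟨by linarith, by linarith⟩
  | (n+1) => exact Or.inl ⟨x, h n, rfl⟩

lemma C_right {x : ℝ} (h : x ∈ C) : x/3 + 2/3 ∈ C := by
  rw [mem_C_iff] at h ⊢
  intro n
  match n with
  | 0 =>
    obtain ⟨h0, h1⟩ := E_subset_unit 0 (h 0)
    exact ⟨by linarith, by linarith⟩
  | (n+1) => exact Or.inr ⟨x, h n, rfl⟩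

lemma C_split {x : ℝ} (h : x ∈ C) :
    (∃ y ∈ C, x = y/3) ∨ (∃ y ∈ C, x = y/3 + 2/3) := by
  rw [mem_C_iff] at h
  rcases h 1 with ⟨y, hy, rfl⟩ | ⟨y, hy, rfl⟩
  · left
    refine ⟨y/3*3, ?_, by ring⟩
    rw [mem_C_iff]
    intro n
    have := h (n+1)
    rcases this with ⟨z, hz, hz'⟩ | ⟨z, hz, hz'⟩
    · have : y/3*3 = z := by simp only at hz'; linarith
      rwa [this]
    · exfalso
      have h1 : z/3 + 2/3 = y/3 := hz'
      have hz01 := E_subset_unit n hz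
      have hy01 := E_subset_unit 0 hy
      simp only [mem_Icc] at hz01 hy01
      linarith [hz01.1, hy01.2]
  · right
    refine ⟨(y/3+2/3-2/3)*3, ?_, by ring⟩
    rw [mem_C_iff]
    intro n
    have := h (n+1)
    rcases this with ⟨z, hz, hz'⟩ | ⟨z, hz, hz'⟩
    · exfalso
      have h1 : z/3 = y/3 + 2/3 := hz'
      have hz01 := E_subset_unit n hz
      have hy01 := E_subset_unit 0 hy
      simp only [mem_Icc] at hz01 hy01
      linarith [hz01.2, hy01.1]
    · have h1 : z/3 + 2/3 = y/3 + 2/3 := hz'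
      have : (y/3+2/3-2/3)*3 = z := by linarith
      rwa [this]

/-- endpoint coded by binary digits -/
noncomputable def pt (m : ℕ) (b : Fin m → Bool) : ℝ :=
  ∑ i : Fin m, cond (b i) (2/3 * (1/3) ^ (i : ℕ)) 0

lemma pt_cons (m : ℕ) (δ : Bool) (b : Fin m → Bool) :
    pt (m+1) (Fin.cons δ b) = cond δ (2/3) 0 + (1/3) * pt m b := by
  unfold pt
  rw [Fin.sum_univ_succ, Finset.mul_sum]
  congr 1
  · cases δ <;> simp
  · apply Finset.sum_congr rfl
    intro i _
    simp only [Fin.cons_succ, Fin.val_succ]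
    cases b i <;> simp <;> ring

lemma pt_zero (b : Fin 0 → Bool) : pt 0 b = 0 := by simp [pt]

lemma C_decomp (m : ℕ) :
    C = ⋃ b : Fin m → Bool, (fun x => pt m b + (1/3)^m * x) '' C := by
  induction m with
  | zero =>
    ext x
    simp [pt_zero]
  | succ m ih =>
    ext x
    simp only [mem_iUnion, mem_image]
    constructor
    · intro hx
      rcases C_split hx with ⟨y, hy, rfl⟩ | ⟨y, hy, rfl⟩
      · rw [ih] at hy
        simp only [mem_iUnion, mem_image] at hy
        obtain ⟨b, z, hz, hz'⟩ := hy
        refine ⟨Fin.cons false b, z, hz, ?_⟩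
        rw [pt_cons]
        simp only [cond]
        rw [pow_succ]
        linarith
      · rw [ih] at hy
        simp only [mem_iUnion, mem_image] at hy
        obtain ⟨b, z, hz, hz'⟩ := hy
        refine ⟨Fin.cons true b, z, hz, ?_⟩
        rw [pt_cons]
        simp only [cond]
        rw [pow_succ]
        linarith
    · rintro ⟨b, z, hz, rfl⟩
      have hb : b = Fin.cons (b 0) (Fin.tail b) := (Fin.cons_self_tail b).symm
      rw [hb, pt_cons]
      have hmem : pt m (Fin.tail b) + (1/3)^m * z ∈ C := by
        rw [ih]
        simp only [mem_iUnion, mem_image]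
        exact ⟨Fin.tail b, z, hz, rfl⟩
      cases hb0 : b 0
      · simp only [cond]
        have := C_left hmem
        convert this using 1
        rw [pow_succ]; ring
      · simp only [cond]
        have := C_right hmem
        convert this using 1
        rw [pow_succ]; ring

lemma E_decomp (m : ℕ) :
    E m = ⋃ b : Fin m → Bool, Icc (pt m b) (pt m b + (1/3)^m) := by
  induction m with
  | zero =>
    ext x
    simp [pt_zero, E]
  | succ m ih =>
    ext x
    simp only [E, ih, mem_union, mem_image, mem_iUnion, mem_Icc]
    constructor
    · rintro (⟨y, ⟨b, hy1, hy2⟩, rfl⟩ | ⟨y, ⟨b, hy1, hy2⟩, rfl⟩)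
      · refine ⟨Fin.cons false b, ?_⟩
        rw [pt_cons]; simp only [cond]; rw [pow_succ]
        constructor <;> linarith
      · refine ⟨Fin.cons true b, ?_⟩
        rw [pt_cons]; simp only [cond]; rw [pow_succ]
        constructor <;> linarith
    · rintro ⟨b, h1, h2⟩
      have hb : b = Fin.cons (b 0) (Fin.tail b) := (Fin.cons_self_tail b).symm
      rw [hb, pt_cons] at h1 h2
      cases hb0 : b 0 <;> rw [hb0] at h1 h2
      · left
        refine ⟨3*x, ⟨Fin.tail b, ?_, ?_⟩, by ring⟩
        · simp only [cond] at h1; linarith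
        · simp only [cond] at h2; rw [pow_succ] at h2; linarith
      · right
        refine ⟨3*(x - 2/3), ⟨Fin.tail b, ?_, ?_⟩, by ring⟩
        · simp only [cond] at h1; linarith
        · simp only [cond] at h2; rw [pow_succ] at h2; linarith

lemma C_symm : ∀ {x : ℝ}, x ∈ C → 1 - x ∈ C := by
  have key : ∀ n x, x ∈ E n → 1 - x ∈ E n := by
    intro n
    induction n with
    | zero => intro x hx; exact ⟨by linarith [hx.2], by linarith [hx.1]⟩
    | succ n ih =>
      rintro x (⟨y, hy, rfl⟩ | ⟨y, hy, rfl⟩)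
      · exact Or.inr ⟨1 - y, ih y hy, by ring⟩
      · exact Or.inl ⟨1 - y, ih y hy, by ring⟩
  intro x hx
  exact mem_iInter.2 fun n => key n x (mem_iInter.1 hx n)

/-- partial sums of a digit sequence -/
noncomputable def psum (β : ℕ → Bool) (n : ℕ) : ℝ :=
  ∑ i ∈ Finset.range n, cond (β i) (2/3 * (1/3) ^ i) 0

lemma psum_succ (β : ℕ → Bool) (n : ℕ) :
    psum β (n+1) = psum β n + cond (β n) (2/3 * (1/3) ^ n) 0 :=
  Finset.sum_range_succ _ _

lemma cond_nonneg (b : Bool) (n : ℕ) : 0 ≤ cond b (2/3 * (1/3:ℝ) ^ n) 0 := by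
  cases b <;> simp

lemma cond_le (b : Bool) (n : ℕ) : cond b (2/3 * (1/3:ℝ) ^ n) 0 ≤ 2/3 * (1/3)^n := by
  cases b <;> simp

lemma psum_gap (β : ℕ → Bool) (n d : ℕ) :
    psum β (n+d) ≤ psum β n + (1/3)^n - (1/3)^(n+d) := by
  induction d with
  | zero => simp
  | succ d ih =>
    rw [← Nat.add_assoc, psum_succ]
    have h1 := cond_le (β (n+d)) (n+d)
    have : (1/3:ℝ)^(n+d+1) = (1/3)^(n+d) - 2/3 * (1/3)^(n+d) := by
      rw [pow_succ]; ring
    linarith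

lemma psum_mono (β : ℕ → Bool) : Monotone (psum β) := by
  apply monotone_nat_of_le_succ
  intro n
  rw [psum_succ]
  linarith [cond_nonneg (β n) n]

lemma psum_bdd (β : ℕ → Bool) (m : ℕ) : psum β m ≤ 1 := by
  have : psum β m ≤ 0 + 1 - (1/3:ℝ)^m := by simpa [psum] using psum_gap β 0 m
  have hp : (0:ℝ) < (1/3)^m := by positivity
  linarith

noncomputable def lim (β : ℕ → Bool) : ℝ := sSup (Set.range (psum β))

lemma lim_spec (β : ℕ → Bool) (n : ℕ) :
    psum β n ≤ lim β ∧ lim β ≤ psum β n + (1/3)^n := by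
  have hbdd : BddAbove (Set.range (psum β)) := ⟨1, by rintro _ ⟨m, rfl⟩; exact psum_bdd β m⟩
  constructor
  · exact le_csSup hbdd ⟨n, rfl⟩
  · apply csSup_le (Set.range_nonempty _)
    rintro _ ⟨m, rfl⟩
    rcases le_or_gt m n with h | h
    · have := psum_mono β h
      have hp : (0:ℝ) < (1/3)^n := by positivity
      linarith
    · obtain ⟨d, rfl⟩ := Nat.le.dest h.le
      have := psum_gap β n d
      have hp : (0:ℝ) < (1/3)^(n+d) := by positivity
      linarith

lemma lim_mem_C (β : ℕ → Bool) : lim β ∈ C := by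
  apply mem_iInter.2
  intro n
  rw [E_decomp]
  apply mem_iUnion.2
  refine ⟨fun i : Fin n => β i, ?_⟩
  have hpt : pt n (fun i : Fin n => β i) = psum β n := by
    unfold pt psum
    rw [Fin.sum_univ_eq_sum_range (fun i => cond (β i) (2/3 * (1/3:ℝ) ^ i) 0) n]
  rw [mem_Icc, hpt]
  exact lim_spec β n

/-- greedy digit choice -/
noncomputable def ch (s q r : ℝ) : Bool × Bool :=
  if r ≤ (1+s)*q/3 then (false, false)
  else if r ≤ (1+3*s)*q/3 then (false, true)
  else if r ≤ (3+s)*q/3 then (true, false)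
  else (true, true)

/-- remainders in the greedy construction -/
noncomputable def rem (s u : ℝ) : ℕ → ℝ
  | 0 => u
  | n+1 =>
    rem s u n - (cond (ch s ((1/3)^n) (rem s u n)).1 (2/3*(1/3)^n) 0)
             - s * (cond (ch s ((1/3)^n) (rem s u n)).2 (2/3*(1/3)^n) 0)

noncomputable def bX (s u : ℝ) (n : ℕ) : Bool := (ch s ((1/3)^n) (rem s u n)).1
noncomputable def bY (s u : ℝ) (n : ℕ) : Bool := (ch s ((1/3)^n) (rem s u n)).2

lemma rem_succ (s u : ℝ) (n : ℕ) :
    rem s u (n+1) = rem s u n - cond (bX s u n) (2/3*(1/3)^n) 0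
      - s * cond (bY s u n) (2/3*(1/3)^n) 0 := rfl

lemma rem_bounds (s : ℝ) (hs1 : 1/3 ≤ s) (hs2 : s ≤ 1) (u : ℝ) (hu0 : 0 ≤ u)
    (hu1 : u ≤ 1 + s) (n : ℕ) : 0 ≤ rem s u n ∧ rem s u n ≤ (1+s) * (1/3)^n := by
  induction n with
  | zero => exact ⟨hu0, by show u ≤ (1+s) * (1/3)^0; simpa using hu1⟩
  | succ n ih =>
    obtain ⟨h0, h1⟩ := ih
    have hq : (0:ℝ) < (1/3)^n := by positivity
    have hq1 : (1/3:ℝ)^(n+1) = (1/3)^n * (1/3) := pow_succ _ _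
    rw [rem_succ]
    unfold bX bY ch
    split_ifs with c1 c2 c3 <;> simp only [cond] <;> constructor <;>
      nlinarith [mul_nonneg (sub_nonneg.2 hs2) hq.le, mul_nonneg (sub_nonneg.2 hs1) hq.le]

lemma rem_eq (s u : ℝ) (n : ℕ) :
    rem s u n = u - psum (bX s u) n - s * psum (bY s u) n := by
  induction n with
  | zero => simp [rem, psum]
  | succ n ih =>
    rw [rem_succ, psum_succ, psum_succ, ih]
    ring

lemma cantor_sum (s : ℝ) (hs1 : 1/3 ≤ s) (hs2 : s ≤ 1) (u : ℝ) (hu0 : 0 ≤ u)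
    (hu1 : u ≤ 1 + s) : ∃ x ∈ C, ∃ y ∈ C, u = x + s * y := by
  set x := lim (bX s u) with hx
  set y := lim (bY s u) with hy
  refine ⟨x, lim_mem_C _, y, lim_mem_C _, ?_⟩
  have key : ∀ n : ℕ, |u - (x + s * y)| ≤ 4 * (1/3)^n := by
    intro n
    have hq : (0:ℝ) < (1/3)^n := by positivity
    have h1 := rem_bounds s hs1 hs2 u hu0 hu1 n
    have h2 := rem_eq s u n
    have h3 := lim_spec (bX s u) n
    have h4 := lim_spec (bY s u) n
    have h5 : s * psum (bY s u) n ≤ s * y :=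
      mul_le_mul_of_nonneg_left h4.1 (by linarith)
    have h6 : s * y ≤ s * (psum (bY s u) n + (1/3)^n) :=
      mul_le_mul_of_nonneg_left h4.2 (by linarith)
    have h7 : s * (psum (bY s u) n + (1/3)^n) ≤ s * psum (bY s u) n + (1/3)^n := by
      have : s * (1/3:ℝ)^n ≤ 1 * (1/3)^n := mul_le_mul_of_nonneg_right hs2 hq.le
      nlinarith
    rw [abs_le]
    constructor <;> nlinarith [h3.1, h3.2, h1.1, h1.2]
  by_contra hne
  have hd : 0 < |u - (x + s * y)| := abs_pos.2 (sub_ne_zero.2 hne)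
  obtain ⟨n, hn⟩ := exists_pow_lt_of_lt_one (show (0:ℝ) < |u - (x + s*y)|/4 by linarith)
    (show (1/3:ℝ) < 1 by norm_num)
  have := key n
  linarith

lemma sumset (t : ℝ) (m : ℕ) (h1 : (1/3:ℝ)^(m+1) ≤ t) (h2 : t < (1/3:ℝ)^m) :
    {u : ℝ | ∃ X ∈ C, ∃ Y ∈ C, u = X + t * Y} =
      ⋃ b : Fin m → Bool, Icc (pt m b) (pt m b + ((1/3)^m + t)) := by
  have h3 : ((1/3:ℝ))^m * 3^m = 1 := by
    rw [one_div, inv_pow, inv_mul_cancel₀ (by positivity)]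
  have hq : (0:ℝ) < (1/3)^m := by positivity
  have ht0 : 0 < t := lt_of_lt_of_le (by positivity) h1
  set s : ℝ := 3^m * t with hs
  have hs1 : 1/3 ≤ s := by
    have : (3:ℝ)^m * (1/3)^(m+1) = 1/3 := by rw [pow_succ]; nlinarith
    nlinarith [pow_pos (show (0:ℝ) < 3 by norm_num) m]
  have hs2 : s ≤ 1 := by nlinarith [pow_pos (show (0:ℝ) < 3 by norm_num) m]
  have hts : (1/3:ℝ)^m * s = t := by rw [hs]; nlinarith
  ext u
  simp only [mem_setOf_eq, mem_iUnion, mem_Icc]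
  constructor
  · rintro ⟨X, hX, Y, hY, rfl⟩
    rw [C_decomp m] at hX
    simp only [mem_iUnion, mem_image] at hX
    obtain ⟨b, x', hx', rfl⟩ := hX
    obtain ⟨hx0, hx1⟩ := C_subset_unit hx'
    obtain ⟨hY0, hY1⟩ := C_subset_unit hY
    refine ⟨b, by nlinarith, by nlinarith⟩
  · rintro ⟨b, hb0, hb1⟩
    have hu0 : 0 ≤ (u - pt m b) * 3^m := by nlinarith [pow_pos (show (0:ℝ) < 3 by norm_num) m]
    have hu1 : (u - pt m b) * 3^m ≤ 1 + s := by
      have : ((1/3:ℝ)^m + t) * 3^m = 1 + s := by rw [hs]; nlinarith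
      nlinarith [pow_pos (show (0:ℝ) < 3 by norm_num) m]
    obtain ⟨x', hx', y', hy', hxy⟩ := cantor_sum s hs1 hs2 _ hu0 hu1
    refine ⟨pt m b + (1/3)^m * x', ?_, y', hy', ?_⟩
    · rw [C_decomp m]
      simp only [mem_iUnion, mem_image]
      exact ⟨b, x', hx', rfl⟩
    · have : u - pt m b = ((u - pt m b) * 3^m) * (1/3)^m := by nlinarith
      rw [hxy] at this
      linear_combination this + y' * hts


lemma K_eq_CC (c : Fin 4 → EuclideanSpace ℝ (Fin 2))
    (hc : c = ![!₂[0, 0], !₂[1, 0], !₂[1, 1], !₂[0, 1]])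
    (f : Fin 4 → EuclideanSpace ℝ (Fin 2) → EuclideanSpace ℝ (Fin 2))
    (hf : ∀ j x, f j x = (1/3 : ℝ) • x + (2/3 : ℝ) • c j)
    (K : Set (EuclideanSpace ℝ (Fin 2)))
    (hKc : IsCompact K) (hKne : K.Nonempty)
    (hattr : K = ⋃ j, f j '' K) :
    ∀ z : EuclideanSpace ℝ (Fin 2), z ∈ K ↔ (z 0 ∈ C ∧ z 1 ∈ C) := by
  have hcoord : ∀ (j : Fin 4) (p : EuclideanSpace ℝ (Fin 2)) (i : Fin 2),
      f j p i = p i / 3 + 2/3 * c j i := by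
    intro j p i
    rw [hf]
    simp only [PiLp.add_apply, PiLp.smul_apply, smul_eq_mul]
    ring
  have hc01 : ∀ (j : Fin 4) (i : Fin 2), 0 ≤ c j i ∧ c j i ≤ 1 := by
    subst hc
    intro j i
    fin_cases j <;> fin_cases i <;>
      norm_num [Matrix.cons_val_zero, Matrix.cons_val_one, Matrix.vecHead, Matrix.vecTail]
  have hcval : c 0 0 = 0 ∧ c 0 1 = 0 ∧ c 1 0 = 1 ∧ c 1 1 = 0 ∧ c 2 0 = 1 ∧ c 2 1 = 1
      ∧ c 3 0 = 0 ∧ c 3 1 = 1 := by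
    subst hc
    exact ⟨rfl, rfl, rfl, rfl, rfl, rfl, rfl, rfl⟩
  have hmemf : ∀ (j : Fin 4) (p), p ∈ K → f j p ∈ K := by
    intro j p hp
    rw [hattr]
    exact mem_iUnion.2 ⟨j, mem_image_of_mem _ hp⟩
  -- step 1 : K ⊆ [0,1]^2
  have hK01 : ∀ z ∈ K, ∀ i : Fin 2, z i ∈ Icc (0:ℝ) 1 := by
    intro z hz i
    have hcont : Continuous (fun w : EuclideanSpace ℝ (Fin 2) => w i) :=
      (EuclideanSpace.proj (𝕜 := ℝ) i).continuous
    obtain ⟨zM, hzM, hmax⟩ := hKc.exists_isMaxOn hKne hcont.continuousOn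
    obtain ⟨zm, hzm, hmin⟩ := hKc.exists_isMinOn hKne hcont.continuousOn
    have hM1 : zM i ≤ 1 := by
      have : zM ∈ ⋃ j, f j '' K := hattr ▸ hzM
      obtain ⟨j, w, hw, rfl⟩ := by simpa only [mem_iUnion, mem_image] using this
      have h1 : w i ≤ f j w i := hmax hw
      have h2 : f j w i = w i / 3 + 2/3 * c j i := hcoord j w i
      have h3 := (hc01 j i).2
      linarith
    have hm0 : 0 ≤ zm i := by
      have : zm ∈ ⋃ j, f j '' K := hattr ▸ hzm
      obtain ⟨j, w, hw, rfl⟩ := by simpa only [mem_iUnion, mem_image] using this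
      have h1 : f j w i ≤ w i := hmin hw
      have h2 : f j w i = w i / 3 + 2/3 * c j i := hcoord j w i
      have h3 := (hc01 j i).1
      linarith
    exact ⟨le_trans hm0 (hmin hz), le_trans (hmax hz) hM1⟩
  -- values of c are 0 or 1
  have hcv : ∀ (j : Fin 4) (i : Fin 2), c j i = 0 ∨ c j i = 1 := by
    subst hc
    intro j i
    fin_cases j <;> fin_cases i <;>
      norm_num [Matrix.cons_val_zero, Matrix.cons_val_one, Matrix.vecHead, Matrix.vecTail]
  -- step 2 : K ⊆ C × C
  have hKE : ∀ n, ∀ z ∈ K, z 0 ∈ E n ∧ z 1 ∈ E n := by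
    intro n
    induction n with
    | zero =>
      intro z hz
      exact ⟨hK01 z hz 0, hK01 z hz 1⟩
    | succ n ih =>
      intro z hz
      have : z ∈ ⋃ j, f j '' K := hattr ▸ hz
      obtain ⟨j, w, hw, rfl⟩ := by simpa only [mem_iUnion, mem_image] using this
      obtain ⟨hw0, hw1⟩ := ih w hw
      constructor
      · rw [hcoord j w 0]
        rcases hcv j 0 with h | h <;> rw [h]
        · exact Or.inl ⟨w 0, hw0, by ring⟩
        · exact Or.inr ⟨w 0, hw0, by ring⟩
      · rw [hcoord j w 1]
        rcases hcv j 1 with h | h <;> rw [h]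
        · exact Or.inl ⟨w 1, hw1, by ring⟩
        · exact Or.inr ⟨w 1, hw1, by ring⟩
  -- step 3 : approximation of points of C × C by points of K
  have approx : ∀ m : ℕ, ∀ x ∈ C, ∀ y ∈ C, ∃ p ∈ K,
      |x - p 0| ≤ (1/3)^m ∧ |y - p 1| ≤ (1/3)^m := by
    intro m
    induction m with
    | zero =>
      intro x hx y hy
      obtain ⟨p, hp⟩ := hKne
      refine ⟨p, hp, ?_, ?_⟩
      · obtain ⟨h1, h2⟩ := C_subset_unit hx
        obtain ⟨h3, h4⟩ := hK01 p hp 0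
        rw [abs_le]; constructor <;> simp <;> linarith
      · obtain ⟨h1, h2⟩ := C_subset_unit hy
        obtain ⟨h3, h4⟩ := hK01 p hp 1
        rw [abs_le]; constructor <;> simp <;> linarith
    | succ m ih =>
      intro x hx y hy
      obtain ⟨hc00, hc01', hc10, hc11, hc20, hc21, hc30, hc31⟩ := hcval
      rcases C_split hx with ⟨x', hx', rfl⟩ | ⟨x', hx', rfl⟩ <;>
        rcases C_split hy with ⟨y', hy', rfl⟩ | ⟨y', hy', rfl⟩ <;>
        obtain ⟨p, hp, hp0, hp1⟩ := ih x' hx' y' hy'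
      · refine ⟨f 0 p, hmemf 0 p hp, ?_, ?_⟩
        · rw [hcoord 0 p 0, hc00]
          rw [show x'/3 - (p 0/3 + 2/3*0) = (x' - p 0)/3 by ring, abs_div]
          rw [pow_succ]
          rw [show |(3:ℝ)| = 3 by norm_num]
          linarith
        · rw [hcoord 0 p 1, hc01']
          rw [show y'/3 - (p 1/3 + 2/3*0) = (y' - p 1)/3 by ring, abs_div]
          rw [pow_succ, show |(3:ℝ)| = 3 by norm_num]
          linarith
      · refine ⟨f 3 p, hmemf 3 p hp, ?_, ?_⟩
        · rw [hcoord 3 p 0, hc30]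
          rw [show x'/3 - (p 0/3 + 2/3*0) = (x' - p 0)/3 by ring, abs_div]
          rw [pow_succ, show |(3:ℝ)| = 3 by norm_num]
          linarith
        · rw [hcoord 3 p 1, hc31]
          rw [show y'/3 + 2/3 - (p 1/3 + 2/3*1) = (y' - p 1)/3 by ring, abs_div]
          rw [pow_succ, show |(3:ℝ)| = 3 by norm_num]
          linarith
      · refine ⟨f 1 p, hmemf 1 p hp, ?_, ?_⟩
        · rw [hcoord 1 p 0, hc10]
          rw [show x'/3 + 2/3 - (p 0/3 + 2/3*1) = (x' - p 0)/3 by ring, abs_div]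
          rw [pow_succ, show |(3:ℝ)| = 3 by norm_num]
          linarith
        · rw [hcoord 1 p 1, hc11]
          rw [show y'/3 - (p 1/3 + 2/3*0) = (y' - p 1)/3 by ring, abs_div]
          rw [pow_succ, show |(3:ℝ)| = 3 by norm_num]
          linarith
      · refine ⟨f 2 p, hmemf 2 p hp, ?_, ?_⟩
        · rw [hcoord 2 p 0, hc20]
          rw [show x'/3 + 2/3 - (p 0/3 + 2/3*1) = (x' - p 0)/3 by ring, abs_div]
          rw [pow_succ, show |(3:ℝ)| = 3 by norm_num]
          linarith
        · rw [hcoord 2 p 1, hc21]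
          rw [show y'/3 + 2/3 - (p 1/3 + 2/3*1) = (y' - p 1)/3 by ring, abs_div]
          rw [pow_succ, show |(3:ℝ)| = 3 by norm_num]
          linarith
  -- conclusion
  intro z
  constructor
  · intro hz
    constructor
    · exact mem_C_iff.2 fun n => (hKE n z hz).1
    · exact mem_C_iff.2 fun n => (hKE n z hz).2
  · rintro ⟨hz0, hz1⟩
    have hcl : IsClosed K := hKc.isClosed
    rw [← hcl.closure_eq]
    rw [Metric.mem_closure_iff]
    intro ε hε
    obtain ⟨m, hm⟩ := exists_pow_lt_of_lt_one (show (0:ℝ) < ε/2 by linarith)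
      (show (1/3:ℝ) < 1 by norm_num)
    obtain ⟨p, hp, h0, h1⟩ := approx m (z 0) hz0 (z 1) hz1
    refine ⟨p, hp, ?_⟩
    have hq : (0:ℝ) < (1/3)^m := by positivity
    have hdist : dist z p ≤ |z 0 - p 0| + |z 1 - p 1| := by
      rw [EuclideanSpace.dist_eq]
      have h2 : ∑ i : Fin 2, dist (z i) (p i) ^ 2 = dist (z 0) (p 0)^2 + dist (z 1) (p 1)^2 :=
        Fin.sum_univ_two _
      rw [h2, Real.dist_eq, Real.dist_eq]
      have h3 : |z 0 - p 0| ^ 2 + |z 1 - p 1| ^ 2 ≤ (|z 0 - p 0| + |z 1 - p 1|)^2 := by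
        nlinarith [abs_nonneg (z 0 - p 0), abs_nonneg (z 1 - p 1)]
      calc √(|z 0 - p 0| ^ 2 + |z 1 - p 1| ^ 2)
          ≤ √((|z 0 - p 0| + |z 1 - p 1|)^2) := Real.sqrt_le_sqrt h3
        _ = |z 0 - p 0| + |z 1 - p 1| := Real.sqrt_sq (by positivity)
    calc dist z p ≤ |z 0 - p 0| + |z 1 - p 1| := hdist
      _ ≤ (1/3)^m + (1/3)^m := add_le_add h0 h1
      _ < ε := by linarith

lemma img_Icc (a b : ℝ) (h : a ≤ b) (v w : EuclideanSpace ℝ (Fin 2)) :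
    (fun u : ℝ => u • v + w) '' Icc a b = segment ℝ (a • v + w) (b • v + w) := by
  have key : ∀ (t1 t2 : ℝ), t1 • (a • v + w) + t2 • (b • v + w)
      = (t1 * a + t2 * b) • v + (t1 + t2) • w := by intros; module
  rw [← segment_eq_Icc h]
  ext p
  constructor
  · rintro ⟨u, ⟨t1, t2, ht1, ht2, hsum, rfl⟩, rfl⟩
    refine ⟨t1, t2, ht1, ht2, hsum, ?_⟩
    rw [key, hsum, one_smul]
    simp only [smul_eq_mul]
  · rintro ⟨t1, t2, ht1, ht2, hsum, rfl⟩
    refine ⟨t1 * a + t2 * b, ⟨t1, t2, ht1, ht2, hsum, by simp [smul_eq_mul]⟩, ?_⟩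
    rw [key, hsum, one_smul]

end FC

/-- For the four corner Cantor set with contraction ratio `1/3` and a direction
`θ = (cos α, sin α)` with `α ∈ (0, π/4]` and `tan α ∈ [3^{-k}, 3^{-(k-1)})`, the
projection `P_θ(K)` is a union of `2^{k-1}` (nondegenerate) closed line segments. -/
theorem stmt16 (c : Fin 4 → EuclideanSpace ℝ (Fin 2))
    (hc : c = ![!₂[0, 0], !₂[1, 0], !₂[1, 1], !₂[0, 1]])
    (f : Fin 4 → EuclideanSpace ℝ (Fin 2) → EuclideanSpace ℝ (Fin 2))
    (hf : ∀ j x, f j x = (1/3 : ℝ) • x + (2/3 : ℝ) • c j)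
    (K : Set (EuclideanSpace ℝ (Fin 2)))
    (hKc : IsCompact K) (hKne : K.Nonempty)
    (hattr : K = ⋃ j, f j '' K)
    (k : ℕ) (hk : 1 ≤ k)
    (α : ℝ) (hα : α ∈ Set.Ioc 0 (Real.pi / 4))
    (htan : Real.tan α ∈ Set.Ico ((3 : ℝ) ^ (-(k : ℤ))) ((3 : ℝ) ^ (-((k : ℤ) - 1))))
    (θ : EuclideanSpace ℝ (Fin 2)) (hθ : θ = !₂[Real.cos α, Real.sin α]) :
    ∃ a b : Fin (2 ^ (k - 1)) → EuclideanSpace ℝ (Fin 2),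
      (∀ j, a j ≠ b j) ∧ projH θ 0 '' K = ⋃ j, segment ℝ (a j) (b j) := by
  obtain ⟨hα0, hα1⟩ := hα
  have hπ := Real.pi_pos
  have hcos : 0 < Real.cos α := Real.cos_pos_of_mem_Ioo ⟨by linarith, by linarith⟩
  have hsin : 0 < Real.sin α := Real.sin_pos_of_pos_of_lt_pi hα0 (by linarith)
  set t := Real.tan α with htdef
  have hsc : Real.sin α = t * Real.cos α := by
    rw [htdef, Real.tan_eq_sin_div_cos]
    field_simp
  set m := k - 1 with hm
  have hkm : m + 1 = k := Nat.succ_pred_eq_of_pos hk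
  -- translate the tangent bounds
  have hz1 : (3:ℝ) ^ (-(k : ℤ)) = (1/3) ^ (m+1) := by
    rw [zpow_neg, zpow_natCast, ← inv_pow, one_div, hkm]
  have hz2 : (3:ℝ) ^ (-((k : ℤ) - 1)) = (1/3) ^ m := by
    have hk' : (k : ℤ) - 1 = (m : ℤ) := by
      rw [← hkm]; push_cast; ring
    rw [hk', zpow_neg, zpow_natCast, ← inv_pow, one_div]
  have ht1 : (1/3:ℝ)^(m+1) ≤ t := hz1 ▸ htan.1
  have ht2 : t < (1/3:ℝ)^m := hz2 ▸ htan.2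
  have hq : (0:ℝ) < (1/3)^m := by positivity
  have ht0 : 0 < t := lt_of_lt_of_le (by positivity) ht1
  -- the Cantor set structure of K
  have K_eq := FC.K_eq_CC c hc f hf K hKc hKne hattr
  -- the direction vector of the line
  obtain ⟨e, he⟩ : ∃ e : EuclideanSpace ℝ (Fin 2), e = !₂[Real.sin α, -Real.cos α] := ⟨_, rfl⟩
  have he0 : e 0 = Real.sin α := by rw [he]; simp
  have he1 : e 1 = -Real.cos α := by rw [he]; simp
  -- the projection formula
  have hproj : ∀ z : EuclideanSpace ℝ (Fin 2),
      projH θ 0 z = (z 0 * Real.sin α - z 1 * Real.cos α) • e := by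
    intro z
    have hpy : Real.sin α ^ 2 + Real.cos α ^ 2 = 1 := Real.sin_sq_add_cos_sq α
    unfold projH
    have hinner : ⟪z - 0, θ⟫ = z 0 * Real.cos α + z 1 * Real.sin α := by
      rw [sub_zero, PiLp.inner_apply, Fin.sum_univ_two, hθ]
      simp [RCLike.inner_apply]; ring
    rw [hinner]
    ext i
    fin_cases i
    · simp only [Fin.mk_zero, Fin.mk_one, PiLp.sub_apply, PiLp.smul_apply, hθ, smul_eq_mul,
        Matrix.cons_val_zero, Matrix.cons_val_one, Matrix.vecHead, Matrix.vecTail, he0, he1]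
      linear_combination (-(z 0)) * hpy
    · simp only [Fin.mk_zero, Fin.mk_one, PiLp.sub_apply, PiLp.smul_apply, hθ, smul_eq_mul,
        Matrix.cons_val_zero, Matrix.cons_val_one, Matrix.vecHead, Matrix.vecTail, he0, he1]
      linear_combination (-(z 1)) * hpy
  -- affine reparametrization
  obtain ⟨v, hv⟩ : ∃ v : EuclideanSpace ℝ (Fin 2), v = Real.cos α • e := ⟨_, rfl⟩
  obtain ⟨w, hw⟩ : ∃ w : EuclideanSpace ℝ (Fin 2), w = (-Real.cos α) • e := ⟨_, rfl⟩
  have hφ : ∀ u : ℝ, (Real.cos α * (u - 1)) • e = u • v + w := by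
    intro u
    rw [hv, hw]
    module
  -- the image of K as an image of the sumset
  have himg : projH θ 0 '' K
      = (fun u : ℝ => u • v + w) '' {u : ℝ | ∃ X ∈ FC.C, ∃ Y ∈ FC.C, u = X + t * Y} := by
    ext p
    constructor
    · rintro ⟨z, hz, rfl⟩
      obtain ⟨hz0, hz1⟩ := (K_eq z).1 hz
      refine ⟨(1 - z 1) + t * (z 0), ⟨1 - z 1, FC.C_symm hz1, z 0, hz0, rfl⟩, ?_⟩
      rw [hproj z]
      show (1 - z 1 + t * z 0) • v + w = _
      rw [← hφ]
      congr 1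
      linear_combination (-(z 0)) * hsc
    · rintro ⟨u, ⟨X, hX, Y, hY, rfl⟩, rfl⟩
      obtain ⟨z, hzdef⟩ : ∃ z : EuclideanSpace ℝ (Fin 2), z = !₂[Y, 1 - X] := ⟨_, rfl⟩
      have hz0 : z 0 = Y := by rw [hzdef]; simp
      have hz1 : z 1 = 1 - X := by rw [hzdef]; simp
      refine ⟨z, (K_eq z).2 ⟨hz0 ▸ hY, hz1 ▸ FC.C_symm hX⟩, ?_⟩
      rw [hproj z, hz0, hz1]
      show _ = (X + t * Y) • v + w
      rw [← hφ]
      congr 1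
      linear_combination Y * hsc
  rw [FC.sumset t m ht1 ht2, image_iUnion] at himg
  -- enumerate the binary words
  have hcard : Fintype.card (Fin m → Bool) = 2 ^ m := by
    simp [Fintype.card_fun]
  have ee : (Fin m → Bool) ≃ Fin (2 ^ m) := Fintype.equivFinOfCardEq hcard
  refine ⟨fun j => (FC.pt m (ee.symm j)) • v + w,
    fun j => (FC.pt m (ee.symm j) + ((1/3)^m + t)) • v + w, ?_, ?_⟩
  · -- nondegenerate
    intro j hab
    have h0 := congrArg (fun z : EuclideanSpace ℝ (Fin 2) => z 0) hab
    simp only [PiLp.add_apply, PiLp.smul_apply, smul_eq_mul, hv, hw, he0] at h0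
    nlinarith [mul_pos (show (0:ℝ) < (1/3)^m + t by linarith) (mul_pos hcos hsin)]
  · -- the image is the union of segments
    rw [himg, ← ee.symm.surjective.iUnion_comp
      (fun b => (fun u : ℝ => u • v + w) '' Icc (FC.pt m b) (FC.pt m b + ((1/3)^m + t)))]
    apply iUnion_congr
    intro j
    rw [FC.img_Icc _ _ (by linarith) v w]
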